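/- Let H be a separable real Hilbert space, let (P_n) be a sequence of Borel probability measures on H converging weakly to a Borel probability measure P, and assume P satisfies H1. Then sup_{y ∈ H} ‖∫_H g_y dP_n − ∫_H g_y dP‖ → 0 as n → ∞, where the integrals are Bochner integrals. Equivalently, the depth functions converge uniformly: sup_{y ∈ H} |D(y, P_n) − D(y, P)| → 0. -/

import Mathlib

open MeasureTheory Filter Topology

/-- The direction function `g_y(z) = (z - y)/‖z - y‖` (with `g_y(y) = 0`). -/
noncomputable def gdir {H : Type*} [NormedAddCommGroup H] [InnerProductSpace ℝ H]
    (y z : H) : H := ‖z - y‖⁻¹ • (z - y)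

/-- The depth of `y` with respect to a measure `Q`: `D(y, Q) = 1 - ‖∫ g_y dQ‖`. -/
noncomputable def depth {H : Type*} [NormedAddCommGroup H] [InnerProductSpace ℝ H]
    [MeasurableSpace H] (y : H) (Q : Measure H) : ℝ :=
  1 - ‖∫ z, gdir y z ∂Q‖

section Aux
open Metric Set BoundedContinuousFunction RealInnerProductSpace ENNReal

/-- Truncated direction function. -/
noncomputable def trdir {H : Type*} [NormedAddCommGroup H] [InnerProductSpace ℝ H]
    (y : H) (r : ℝ) (z : H) : H := (max r ‖z - y‖)⁻¹ • (z - y)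

variable {H : Type*} [NormedAddCommGroup H] [InnerProductSpace ℝ H]

lemma norm_gdir_le (y z : H) : ‖gdir y z‖ ≤ 1 := by
  unfold gdir
  rcases eq_or_ne z y with h | h
  · simp [h]
  · rw [norm_smul, norm_inv, norm_norm, inv_mul_cancel₀ (by simpa [sub_eq_zero] using h)]

lemma norm_trdir_le (y : H) {r : ℝ} (hr : 0 < r) (z : H) : ‖trdir y r z‖ ≤ 1 := by
  unfold trdir
  have h1 : (0:ℝ) < max r ‖z - y‖ := lt_max_of_lt_left hr
  rw [norm_smul, norm_inv, Real.norm_eq_abs, abs_of_pos h1, inv_mul_le_iff₀ h1, mul_one]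
  exact le_max_right _ _

lemma trdir_lipschitz (y : H) {r : ℝ} (hr : 0 < r) (a b : H) :
    ‖trdir y r a - trdir y r b‖ ≤ 2 / r * ‖a - b‖ := by
  have hMa0 : (0:ℝ) < max r ‖a - y‖ := lt_max_of_lt_left hr
  have hMb0 : (0:ℝ) < max r ‖b - y‖ := lt_max_of_lt_left hr
  set Ma := max r ‖a - y‖
  set Mb := max r ‖b - y‖
  have hab : (a - y) - (b - y) = a - b := by abel
  have key : trdir y r a - trdir y r b = Ma⁻¹ • ((a-y) - (b-y)) + (Ma⁻¹ - Mb⁻¹) • (b-y) := by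
    show Ma⁻¹ • (a - y) - Mb⁻¹ • (b - y) = _
    module
  have hM : |Mb - Ma| ≤ ‖a - b‖ := by
    have h2 := abs_max_sub_max_le_abs ‖b - y‖ ‖a - y‖ r
    rw [max_comm _ r, max_comm _ r] at h2
    refine h2.trans ((abs_norm_sub_norm_le _ _).trans (le_of_eq ?_))
    rw [show (b - y) - (a - y) = -(a-b) by abel, norm_neg]
  have hMainv : Ma⁻¹ ≤ r⁻¹ := by
    rw [inv_le_inv₀ hMa0 hr]; exact le_max_left _ _
  calc ‖trdir y r a - trdir y r b‖ ≤ Ma⁻¹ * ‖(a-y) - (b-y)‖ + |Ma⁻¹ - Mb⁻¹| * ‖b - y‖ := by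
        rw [key]
        refine (norm_add_le _ _).trans ?_
        rw [norm_smul, norm_smul, norm_inv, Real.norm_eq_abs, abs_of_pos hMa0,
          Real.norm_eq_abs]
    _ ≤ r⁻¹ * ‖a - b‖ + (|Mb - Ma| / (Ma * Mb)) * Mb := by
        refine add_le_add (mul_le_mul hMainv (le_of_eq (by rw [hab]))
          (norm_nonneg _) (by positivity)) ?_
        have h3 : |Ma⁻¹ - Mb⁻¹| = |Mb - Ma| / (Ma * Mb) := by
          rw [inv_sub_inv hMa0.ne' hMb0.ne', abs_div, abs_of_pos (mul_pos hMa0 hMb0)]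
        rw [h3]
        exact mul_le_mul_of_nonneg_left (le_max_right _ _) (by positivity)
    _ ≤ r⁻¹ * ‖a - b‖ + r⁻¹ * ‖a - b‖ := by
        refine add_le_add_right ?_ _
        have h4 : |Mb - Ma| / (Ma * Mb) * Mb = |Mb - Ma| * Ma⁻¹ := by
          field_simp
        rw [h4, mul_comm r⁻¹]
        exact mul_le_mul hM hMainv (by positivity) (norm_nonneg _)
    _ = 2 / r * ‖a - b‖ := by ring

lemma continuous_trdir (y : H) {r : ℝ} (hr : 0 < r) : Continuous (trdir y r) := by
  have h1 : ∀ z : H, max r ‖z - y‖ ≠ 0 := fun z => (lt_max_of_lt_left hr).ne'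
  exact ((continuous_const.max ((continuous_id.sub continuous_const).norm)).inv₀ h1).smul
    (continuous_id.sub continuous_const)

lemma gdir_sub_trdir_le (y : H) {r : ℝ} (hr : 0 < r) (z : H) :
    ‖gdir y z - trdir y r z‖ ≤ (closedBall y r).indicator (fun _ => (2:ℝ)) z := by
  by_cases hz : z ∈ closedBall y r
  · rw [indicator_of_mem hz]
    calc ‖gdir y z - trdir y r z‖ ≤ ‖gdir y z‖ + ‖trdir y r z‖ := norm_sub_le _ _
      _ ≤ 1 + 1 := add_le_add (norm_gdir_le y z) (norm_trdir_le y hr z)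
      _ = 2 := by norm_num
  · rw [indicator_of_notMem hz]
    have : r < ‖z - y‖ := by
      rw [mem_closedBall, dist_eq_norm, not_le] at hz; exact hz
    rw [show gdir y z = trdir y r z by
      unfold gdir trdir; rw [max_eq_right this.le], sub_self, norm_zero]

/-- Key real-valued bounded-Lipschitz estimate from the Lévy-Prokhorov distance. -/
lemma bl_integral_le {Ω : Type*} [MeasurableSpace Ω] [PseudoMetricSpace Ω] [OpensMeasurableSpace Ω]
    (μ ν : Measure Ω) [IsProbabilityMeasure μ] [IsProbabilityMeasure ν]
    {ε Lc : ℝ} (ε_pos : 0 < ε) (hLc : 0 ≤ Lc)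
    (hlt : levyProkhorovEDist μ ν < ENNReal.ofReal ε)
    (f : Ω →ᵇ ℝ) (f_nn : ∀ x, 0 ≤ f x)
    (f_lip : ∀ a b, |f a - f b| ≤ Lc * dist a b) :
    ∫ x, f x ∂μ ≤ ∫ x, f x ∂ν + ε * (Lc + ‖f‖) := by
  set M := ‖f‖ with hM
  have hM0 : 0 ≤ M := norm_nonneg f
  set g : ℝ → ℝ := fun s => (ν {a | s ≤ f a}).toReal with hg
  have g_anti : Antitone g := by
    intro s t hst
    exact ENNReal.toReal_mono (measure_ne_top _ _) (measure_mono (fun a ha => hst.trans ha))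
  have g_nn : ∀ s, 0 ≤ g s := fun s => ENNReal.toReal_nonneg
  have g_le_one : ∀ s, g s ≤ 1 := by
    intro s
    rw [hg]
    simp only
    rw [show (1:ℝ) = (ν univ).toReal by simp]
    exact ENNReal.toReal_mono (measure_ne_top _ _) (measure_mono (subset_univ _))
  have thick_le : ∀ t : ℝ, (ν (thickening ε {a | t ≤ f a})).toReal ≤ g (t - Lc * ε) := by
    intro t
    refine ENNReal.toReal_mono (measure_ne_top _ _) (measure_mono ?_)
    intro x hx
    rw [mem_thickening_iff] at hx
    obtain ⟨z, hz, hdist⟩ := hx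
    have : |f x - f z| ≤ Lc * ε :=
      (f_lip x z).trans (mul_le_mul_of_nonneg_left hdist.le hLc)
    have h2 : f z - Lc * ε ≤ f x := by
      have := abs_le.mp this
      linarith [this.1]
    exact le_trans (by linarith [Set.mem_setOf_eq ▸ hz]) h2
  have key := BoundedContinuousFunction.integral_le_of_levyProkhorovEDist_lt μ ν ε_pos hlt f
    (ae_of_all _ f_nn)
  have h_anti1 : Antitone (fun t => (ν (thickening ε {a | t ≤ f a})).toReal) := by
    intro s t hst
    exact ENNReal.toReal_mono (measure_ne_top _ _)
      (measure_mono (thickening_subset_of_subset ε (fun a ha => hst.trans ha)))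
  have h_anti2 : Antitone (fun t => g (t - Lc * ε)) :=
    fun s t hst => g_anti (by linarith)
  have step1 : ∫ t in Ioc 0 M, (ν (thickening ε {a | t ≤ f a})).toReal
      ≤ ∫ t in Ioc 0 M, g (t - Lc * ε) := by
    rw [← intervalIntegral.integral_of_le hM0, ← intervalIntegral.integral_of_le hM0]
    exact intervalIntegral.integral_mono_on hM0 h_anti1.intervalIntegrable
      h_anti2.intervalIntegrable (fun x _ => thick_le x)
  have step2 : ∫ t in (0:ℝ)..M, g (t - Lc * ε) ≤ Lc * ε + ∫ t in (0:ℝ)..M, g t := by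
    rw [intervalIntegral.integral_comp_sub_right g (Lc * ε)]
    have hsplit : ∫ t in (0 - Lc*ε)..(M - Lc*ε), g t
        = (∫ t in (0 - Lc*ε)..(0:ℝ), g t) + ∫ t in (0:ℝ)..(M - Lc*ε), g t :=
      (intervalIntegral.integral_add_adjacent_intervals
        g_anti.intervalIntegrable g_anti.intervalIntegrable).symm
    rw [hsplit]
    have hp1 : ∫ t in (0 - Lc*ε)..(0:ℝ), g t ≤ Lc * ε := by
      calc ∫ t in (0 - Lc*ε)..(0:ℝ), g t ≤ ∫ _t in (0 - Lc*ε)..(0:ℝ), (1:ℝ) :=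
            intervalIntegral.integral_mono_on (by nlinarith) g_anti.intervalIntegrable
              intervalIntegrable_const (fun x _ => g_le_one x)
        _ = Lc * ε := by
            rw [intervalIntegral.integral_const, smul_eq_mul, mul_one]; ring
    have hp2 : ∫ t in (0:ℝ)..(M - Lc*ε), g t ≤ ∫ t in (0:ℝ)..M, g t := by
      rcases le_or_gt (M - Lc*ε) 0 with h | h
      · have h1 : ∫ t in (0:ℝ)..(M - Lc*ε), g t ≤ 0 := by
          rw [intervalIntegral.integral_symm]
          simp only [neg_nonpos]
          exact intervalIntegral.integral_nonneg h (fun x _ => g_nn x)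
        exact h1.trans (intervalIntegral.integral_nonneg hM0 (fun x _ => g_nn x))
      · have hsplit2 : ∫ t in (0:ℝ)..M, g t
            = (∫ t in (0:ℝ)..(M - Lc*ε), g t) + ∫ t in (M - Lc*ε)..M, g t :=
          (intervalIntegral.integral_add_adjacent_intervals
            g_anti.intervalIntegrable g_anti.intervalIntegrable).symm
        rw [hsplit2]
        have hnn : (0:ℝ) ≤ ∫ t in (M - Lc*ε)..M, g t :=
          intervalIntegral.integral_nonneg (by nlinarith) (fun x _ => g_nn x)
        linarith
    linarith
  have layer_ν : ∫ t in (0:ℝ)..M, g t = ∫ x, f x ∂ν := by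
    rw [intervalIntegral.integral_of_le hM0]
    exact (BoundedContinuousFunction.integral_eq_integral_meas_le f ν (ae_of_all _ f_nn)).symm
  calc ∫ x, f x ∂μ ≤ (∫ t in Ioc 0 M, (ν (thickening ε {a | t ≤ f a})).toReal) + ε * M := key
    _ ≤ (∫ t in Ioc 0 M, g (t - Lc * ε)) + ε * M := by linarith [step1]
    _ = (∫ t in (0:ℝ)..M, g (t - Lc * ε)) + ε * M := by
        rw [intervalIntegral.integral_of_le hM0]
    _ ≤ (Lc * ε + ∫ t in (0:ℝ)..M, g t) + ε * M := by linarith [step2]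
    _ = ∫ x, f x ∂ν + ε * (Lc + M) := by rw [layer_ν]; ring

lemma exists_radius_small_balls {Ω : Type*} [MeasurableSpace Ω] [MetricSpace Ω]
    [OpensMeasurableSpace Ω] (P : Measure Ω) [IsFiniteMeasure P]
    (hatom : ∀ x : Ω, P {x} = 0) {c : ℝ≥0∞} (hc : c ≠ 0) :
    ∃ r : ℝ, 0 < r ∧ ∀ y : Ω, P (closedBall y r) < c := by
  by_contra hcon
  push_neg at hcon
  have hy : ∀ k : ℕ, ∃ y : Ω, c ≤ P (closedBall y (1 / (k+1))) := by
    intro k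
    exact hcon (1 / (k+1)) (by positivity)
  choose y hy using hy
  set A : ℕ → Set Ω := fun k => closedBall (y k) (1 / (k+1)) with hA
  set T : ℕ → Set Ω := fun m => ⋃ k, ⋃ (_ : m ≤ k), A k with hT
  have hTanti : Antitone T := by
    intro m n hmn
    refine Set.iUnion₂_subset fun k hk => ?_
    exact Set.subset_iUnion₂ (s := fun k (_ : m ≤ k) => A k) k (hmn.trans hk)
  have hTmeas : ∀ m, NullMeasurableSet (T m) P := fun m =>
    (MeasurableSet.iUnion fun k => MeasurableSet.iUnion fun _ =>
      measurableSet_closedBall).nullMeasurableSet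
  have hTc : ∀ m, c ≤ P (T m) := by
    intro m
    refine (hy m).trans (measure_mono ?_)
    exact Set.subset_iUnion₂ (s := fun k (_ : m ≤ k) => A k) m le_rfl
  have htend := tendsto_measure_iInter_atTop hTmeas hTanti ⟨0, measure_ne_top _ _⟩
  have hSc : c ≤ P (⋂ m, T m) := ge_of_tendsto' htend hTc
  have hSne : (⋂ m, T m).Nonempty := by
    rw [Set.nonempty_iff_ne_empty]
    intro h
    rw [h, measure_empty] at hSc
    exact hc (le_antisymm hSc zero_le)
  obtain ⟨x, hx⟩ := hSne
  have hxball : ∀ m : ℕ, c ≤ P (closedBall x (2 / (m+1))) := by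
    intro m
    have hxm := Set.mem_iInter.mp hx m
    simp only [hT, Set.mem_iUnion] at hxm
    obtain ⟨k, hk, hxk⟩ := hxm
    refine (hy k).trans (measure_mono ?_)
    intro z hz
    rw [mem_closedBall] at hz hxk ⊢
    have h1 : dist z x ≤ 1/(k+1) + 1/(k+1) :=
      (dist_triangle z (y k) x).trans (add_le_add hz (dist_comm x (y k) ▸ hxk))
    have h2 : 1/((k:ℝ)+1) ≤ 1/((m:ℝ)+1) := by
      apply one_div_le_one_div_of_le (by positivity)
      exact_mod_cast add_le_add_left (Nat.cast_le.mpr hk) 1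
    calc dist z x ≤ 1/(k+1) + 1/(k+1) := h1
      _ ≤ 1/(m+1) + 1/(m+1) := add_le_add h2 h2
      _ = 2/(m+1) := by ring
  have hsingle : (⋂ m : ℕ, closedBall x (2 / (m+1))) = {x} := by
    ext z
    simp only [Set.mem_iInter, mem_closedBall, Set.mem_singleton_iff]
    constructor
    · intro h
      have hd0 : dist z x ≤ 0 := by
        have htd : Tendsto (fun m : ℕ => 2 / ((m:ℝ)+1)) atTop (𝓝 0) := by
          have h5 := tendsto_one_div_add_atTop_nhds_zero_nat.const_mul (2:ℝ)
          simpa [mul_one_div, div_eq_mul_inv] using h5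
        refine ge_of_tendsto htd ?_
        exact Eventually.of_forall h
      exact dist_le_zero.mp hd0
    · intro h m
      rw [h, dist_self]; positivity
  have htend2 := tendsto_measure_iInter_atTop (μ := P)
    (fun m : ℕ => (measurableSet_closedBall :
        MeasurableSet (closedBall x (2 / (m+1)))).nullMeasurableSet)
    (fun m n hmn => closedBall_subset_closedBall (by
      have hmn' : ((m:ℝ)+1) ≤ ((n:ℝ)+1) := by
        exact_mod_cast add_le_add_left (Nat.cast_le.mpr hmn) 1
      gcongr))
    ⟨0, measure_ne_top _ _⟩
  rw [hsingle, hatom x] at htend2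
  have : c ≤ 0 := ge_of_tendsto' htend2 hxball
  exact hc (le_antisymm this zero_le)

section Meas
variable [MeasurableSpace H] [BorelSpace H] [SecondCountableTopology H]

lemma measurable_gdir (y : H) : Measurable (gdir y) :=
  ((measurable_id.sub_const y).norm.inv).smul (measurable_id.sub_const y)

lemma integrable_gdir (y : H) (μ : Measure H) [IsFiniteMeasure μ] :
    Integrable (gdir y) μ :=
  (integrable_const (1:ℝ)).mono' (measurable_gdir y).aestronglyMeasurable
    (ae_of_all _ (norm_gdir_le y))

lemma integrable_trdir (y : H) {r : ℝ} (hr : 0 < r) (μ : Measure H) [IsFiniteMeasure μ] :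
    Integrable (trdir y r) μ :=
  (integrable_const (1:ℝ)).mono' (continuous_trdir y hr).measurable.aestronglyMeasurable
    (ae_of_all _ (norm_trdir_le y hr))

lemma integral_gdir_sub_trdir [CompleteSpace H] (y : H) {r : ℝ} (hr : 0 < r) (μ : Measure H)
    [IsFiniteMeasure μ] :
    ‖(∫ z, gdir y z ∂μ) - ∫ z, trdir y r z ∂μ‖ ≤ 2 * (μ (closedBall y r)).toReal := by
  rw [← integral_sub (integrable_gdir y μ) (integrable_trdir y hr μ)]
  refine (norm_integral_le_integral_norm _).trans ?_
  have h2 : ∫ z, (closedBall y r).indicator (fun _ => (2:ℝ)) z ∂μ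
      = 2 * (μ (closedBall y r)).toReal := by
    rw [integral_indicator_const (2:ℝ) measurableSet_closedBall, smul_eq_mul, mul_comm, measureReal_def]
  rw [← h2]
  refine integral_mono_of_nonneg (ae_of_all _ fun z => norm_nonneg _)
    ((integrable_const (2:ℝ)).indicator measurableSet_closedBall)
    (ae_of_all _ fun z => gdir_sub_trdir_le y hr z)

variable [CompleteSpace H]

lemma integral_trdir_diff_le (μ ν : Measure H) [IsProbabilityMeasure μ] [IsProbabilityMeasure ν]
    (y : H) {r ε : ℝ} (hr : 0 < r) (hε : 0 < ε)
    (hlt : levyProkhorovEDist μ ν < ENNReal.ofReal ε) :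
    ‖(∫ z, trdir y r z ∂μ) - ∫ z, trdir y r z ∂ν‖ ≤ ε * (2 / r + 2) := by
  set x := (∫ z, trdir y r z ∂μ) - ∫ z, trdir y r z ∂ν with hx
  rcases eq_or_ne x 0 with h0 | h0
  · rw [h0, norm_zero]; positivity
  set v : H := ‖x‖⁻¹ • x with hv
  have hv1 : ‖v‖ = 1 := by
    rw [hv, norm_smul, norm_inv, norm_norm, inv_mul_cancel₀ (norm_ne_zero_iff.mpr h0)]
  set φ0 : H → ℝ := fun z => ⟪v, trdir y r z⟫ + 1 with hφ0
  have φcont : Continuous φ0 := ((continuous_const.inner (continuous_trdir y hr))).add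
    continuous_const
  have φbd : ∀ z, ‖φ0 z‖ ≤ 2 := by
    intro z
    have h1 : |⟪v, trdir y r z⟫| ≤ 1 := by
      refine (abs_real_inner_le_norm _ _).trans ?_
      rw [hv1, one_mul]; exact norm_trdir_le y hr z
    have h2 := abs_le.mp h1
    show ‖⟪v, trdir y r z⟫ + 1‖ ≤ 2
    rw [Real.norm_eq_abs, abs_le]
    constructor <;> linarith [h2.1, h2.2]
  set f : H →ᵇ ℝ := BoundedContinuousFunction.ofNormedAddCommGroup φ0 φcont 2 φbd with hf
  have f_nn : ∀ z, 0 ≤ f z := by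
    intro z
    have h1 : |⟪v, trdir y r z⟫| ≤ 1 := by
      refine (abs_real_inner_le_norm _ _).trans ?_
      rw [hv1, one_mul]; exact norm_trdir_le y hr z
    have h2 := (abs_le.mp h1).1
    show (0:ℝ) ≤ ⟪v, trdir y r z⟫ + 1
    linarith
  have f_lip : ∀ a b, |f a - f b| ≤ (2/r) * dist a b := by
    intro a b
    show |φ0 a - φ0 b| ≤ _
    have : φ0 a - φ0 b = ⟪v, trdir y r a - trdir y r b⟫ := by
      rw [hφ0]; simp only [inner_sub_right]; ring
    rw [this, dist_eq_norm]
    refine (abs_real_inner_le_norm _ _).trans ?_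
    rw [hv1, one_mul]
    exact trdir_lipschitz y hr a b
  have hfnorm : ‖f‖ ≤ 2 :=
    BoundedContinuousFunction.norm_ofNormedAddCommGroup_le φcont (by norm_num) φbd
  have hL : (0:ℝ) ≤ 2/r := by positivity
  have h1 := bl_integral_le μ ν hε hL hlt f f_nn f_lip
  have h2 := bl_integral_le ν μ hε hL (by rwa [levyProkhorovEDist_comm]) f f_nn f_lip
  have hint : ∀ (κ : Measure H), IsProbabilityMeasure κ →
      ∫ z, f z ∂κ = ⟪v, ∫ z, trdir y r z ∂κ⟫ + 1 := by
    intro κ hκ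
    show ∫ z, (⟪v, trdir y r z⟫ + 1) ∂κ = _
    rw [integral_add ((integrable_trdir y hr κ).const_inner v) (integrable_const 1),
      integral_inner (integrable_trdir y hr κ), integral_const]
    simp
  rw [hint μ inferInstance, hint ν inferInstance] at h1 h2
  have hxv : ⟪v, x⟫ = ‖x‖ := by
    rw [hv, real_inner_smul_left, real_inner_self_eq_norm_mul_norm,
      inv_mul_cancel_left₀ (norm_ne_zero_iff.mpr h0)]
  have hsub : ⟪v, ∫ z, trdir y r z ∂μ⟫ - ⟪v, ∫ z, trdir y r z ∂ν⟫ = ‖x‖ := by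
    rw [← inner_sub_right, ← hx, hxv]
  have hεf : ε * (2/r + ‖f‖) ≤ ε * (2/r + 2) := by nlinarith
  linarith

lemma ball_bound (μ ν : Measure H) [IsProbabilityMeasure μ] [IsProbabilityMeasure ν]
    (y : H) {r ε₀ : ℝ} (hr : 0 < r) (hε₀ : 0 < ε₀) (hle : ε₀ ≤ r)
    (hlt : levyProkhorovEDist μ ν < ENNReal.ofReal ε₀) :
    (μ (closedBall y r)).toReal ≤ (ν (closedBall y (2*r))).toReal + ε₀ := by
  have h1 := left_measure_le_of_levyProkhorovEDist_lt hlt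
    (B := closedBall y r) measurableSet_closedBall
  rw [ENNReal.toReal_ofReal hε₀.le] at h1
  have h2 : thickening ε₀ (closedBall y r) ⊆ closedBall y (2*r) := by
    intro z hz
    rw [mem_thickening_iff] at hz
    obtain ⟨w, hw, hd⟩ := hz
    rw [mem_closedBall] at hw ⊢
    calc dist z y ≤ dist z w + dist w y := dist_triangle _ _ _
      _ ≤ ε₀ + r := add_le_add hd.le hw
      _ ≤ 2*r := by linarith
  have h3 : μ (closedBall y r) ≤ ν (closedBall y (2*r)) + ENNReal.ofReal ε₀ :=
    h1.trans (add_le_add_left (measure_mono h2) _)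
  calc (μ (closedBall y r)).toReal
      ≤ (ν (closedBall y (2*r)) + ENNReal.ofReal ε₀).toReal :=
        ENNReal.toReal_mono (by finiteness) h3
    _ = (ν (closedBall y (2*r))).toReal + ε₀ := by
        rw [ENNReal.toReal_add (measure_ne_top _ _) ENNReal.ofReal_ne_top,
          ENNReal.toReal_ofReal hε₀.le]
end Meas
end Aux

theorem stmt9 {H : Type*} [NormedAddCommGroup H] [InnerProductSpace ℝ H]
    [CompleteSpace H] [SecondCountableTopology H] [MeasurableSpace H] [BorelSpace H]
    (Pn : ℕ → ProbabilityMeasure H) (P : ProbabilityMeasure H)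
    (hweak : Tendsto Pn atTop (𝓝 P))
    (hH1 : ∀ (y : H) (r : ℝ), 0 < r → (P : Measure H) {z | ‖z - y‖ = r} = 0) :
    TendstoUniformly (fun n y => ∫ z, gdir y z ∂(Pn n : Measure H))
      (fun y => ∫ z, gdir y z ∂(P : Measure H)) atTop ∧
    TendstoUniformly (fun n y => depth y (Pn n : Measure H))
      (fun y => depth y (P : Measure H)) atTop := by
  have main : TendstoUniformly (fun n y => ∫ z, gdir y z ∂(Pn n : Measure H))
      (fun y => ∫ z, gdir y z ∂(P : Measure H)) atTop := by
    rcases subsingleton_or_nontrivial H with hsub | hnt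
    · have hzero : ∀ (Q : Measure H) (y : H), ∫ z, gdir y z ∂Q = 0 := by
        intro Q y
        have : gdir y = fun _ : H => (0:H) := by
          funext z
          unfold gdir
          rw [Subsingleton.elim (z - y) 0]
          simp
        rw [this, integral_zero]
      rw [Metric.tendstoUniformly_iff]
      intro ε hε
      filter_upwards with n y
      rw [hzero, hzero, dist_self]
      exact hε
    · -- the measure P has no atoms
      have hatom : ∀ x : H, (P : Measure H) {x} = 0 := by
        intro x
        obtain ⟨v, hv⟩ := exists_ne (0 : H)
        refine measure_mono_null ?_ (hH1 (x - v) ‖v‖ (norm_pos_iff.mpr hv))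
        intro z hz
        rw [Set.mem_singleton_iff] at hz
        subst hz
        show ‖z - (z - v)‖ = ‖v‖
        congr 1
        abel
      -- Lévy-Prokhorov convergence
      have hLP : ∀ δ : ℝ, 0 < δ → ∀ᶠ n in atTop,
          levyProkhorovEDist (Pn n : Measure H) (P : Measure H) < ENNReal.ofReal δ := by
        intro δ hδ
        have hcont := (MeasureTheory.LevyProkhorov.probabilityMeasureHomeomorph
          (Ω := H)).continuous
        have htend := (hcont.tendsto P).comp hweak
        rw [Metric.tendsto_atTop] at htend
        obtain ⟨N, hN⟩ := htend δ hδ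
        filter_upwards [eventually_ge_atTop N] with n hn
        have := hN n hn
        rw [ENNReal.lt_ofReal_iff_toReal_lt (levyProkhorovEDist_ne_top _ _)]
        exact this
      rw [Metric.tendstoUniformly_iff]
      intro ε hε
      -- choose the radius
      obtain ⟨r', hr', hball⟩ := exists_radius_small_balls (P : Measure H) hatom
        (c := ENNReal.ofReal (ε/16)) (by
          simp only [ne_eq, ENNReal.ofReal_eq_zero, not_le]
          positivity)
      set r := r' / 2 with hrdef
      have hr : 0 < r := by positivity
      set ε₀ : ℝ := min r (min (ε/16) ((ε/4) / (2/r + 2))) with hε₀def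
      have hε₀ : 0 < ε₀ := by
        apply lt_min hr
        apply lt_min (by positivity)
        positivity
      have hε₀r : ε₀ ≤ r := min_le_left _ _
      have hε₀ε : ε₀ ≤ ε/16 := (min_le_right _ _).trans (min_le_left _ _)
      have hε₀q : ε₀ * (2/r + 2) ≤ ε/4 := by
        have h1 : ε₀ ≤ (ε/4) / (2/r + 2) := (min_le_right _ _).trans (min_le_right _ _)
        have h2 : (0:ℝ) < 2/r + 2 := by positivity
        calc ε₀ * (2/r + 2) ≤ ((ε/4) / (2/r + 2)) * (2/r + 2) :=
              mul_le_mul_of_nonneg_right h1 h2.le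
          _ = ε/4 := by field_simp
      have hPball : ∀ y : H, ((P : Measure H) (Metric.closedBall y r)).toReal < ε/16 := by
        intro y
        have h1 : (P : Measure H) (Metric.closedBall y r) < ENNReal.ofReal (ε/16) :=
          lt_of_le_of_lt (measure_mono (Metric.closedBall_subset_closedBall (by
            rw [hrdef]; linarith))) (hball y)
        rw [ENNReal.lt_ofReal_iff_toReal_lt (measure_ne_top _ _)] at h1
        exact h1
      have hPball2 : ∀ y : H, ((P : Measure H) (Metric.closedBall y (2*r))).toReal < ε/16 := by
        intro y
        have h1 : (P : Measure H) (Metric.closedBall y (2*r)) < ENNReal.ofReal (ε/16) := by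
          refine lt_of_le_of_lt (measure_mono (Metric.closedBall_subset_closedBall ?_)) (hball y)
          rw [hrdef]; linarith
        rw [ENNReal.lt_ofReal_iff_toReal_lt (measure_ne_top _ _)] at h1
        exact h1
      filter_upwards [hLP ε₀ hε₀] with n hn y
      -- now the estimate
      have hedist := hn
      have hmid := integral_trdir_diff_le (Pn n : Measure H) (P : Measure H) y hr hε₀ hedist
      have hgA := integral_gdir_sub_trdir y hr (Pn n : Measure H)
      have hgC := integral_gdir_sub_trdir y hr (P : Measure H)
      have hballn : (((Pn n : Measure H)) (Metric.closedBall y r)).toReal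
          ≤ (((P : Measure H)) (Metric.closedBall y (2*r))).toReal + ε₀ :=
        ball_bound (Pn n : Measure H) (P : Measure H) y hr hε₀ hε₀r hedist
      rw [dist_eq_norm]
      have htri : ‖(∫ z, gdir y z ∂(P : Measure H)) - ∫ z, gdir y z ∂(Pn n : Measure H)‖
          ≤ ‖(∫ z, gdir y z ∂(Pn n : Measure H)) - ∫ z, trdir y r z ∂(Pn n : Measure H)‖
            + ‖(∫ z, trdir y r z ∂(Pn n : Measure H)) - ∫ z, trdir y r z ∂(P : Measure H)‖
            + ‖(∫ z, gdir y z ∂(P : Measure H)) - ∫ z, trdir y r z ∂(P : Measure H)‖ := by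
        rw [norm_sub_rev]
        have h4 := dist_triangle4 (∫ z, gdir y z ∂(Pn n : Measure H))
          (∫ z, trdir y r z ∂(Pn n : Measure H)) (∫ z, trdir y r z ∂(P : Measure H))
          (∫ z, gdir y z ∂(P : Measure H))
        rw [dist_eq_norm, dist_eq_norm, dist_eq_norm, dist_eq_norm] at h4
        rw [norm_sub_rev (∫ z, trdir y r z ∂(P : Measure H))] at h4
        exact h4
      calc ‖(∫ z, gdir y z ∂(P : Measure H)) - ∫ z, gdir y z ∂(Pn n : Measure H)‖
          ≤ _ := htri
        _ ≤ 2 * (((Pn n : Measure H)) (Metric.closedBall y r)).toReal + ε₀ * (2/r + 2)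
            + 2 * (((P : Measure H)) (Metric.closedBall y r)).toReal :=
            add_le_add (add_le_add hgA hmid) hgC
        _ ≤ 2 * ((((P : Measure H)) (Metric.closedBall y (2*r))).toReal + ε₀) + ε/4
            + 2 * (ε/16) := by
            have := hPball y
            have := hballn
            nlinarith [hε₀q]
        _ < ε := by
            have := hPball2 y
            nlinarith [hε₀ε, hε₀]
  refine ⟨main, ?_⟩
  rw [Metric.tendstoUniformly_iff] at main ⊢
  intro ε hε
  filter_upwards [main ε hε] with n hn y
  refine lt_of_le_of_lt ?_ (hn y)
  rw [Real.dist_eq, dist_eq_norm]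
  unfold depth
  have h1 : (1 - ‖∫ z, gdir y z ∂(P : Measure H)‖) - (1 - ‖∫ z, gdir y z ∂(Pn n : Measure H)‖)
      = ‖∫ z, gdir y z ∂(Pn n : Measure H)‖ - ‖∫ z, gdir y z ∂(P : Measure H)‖ := by ring
  rw [h1]
  refine (abs_norm_sub_norm_le _ _).trans (le_of_eq ?_)
  rw [norm_sub_rev]
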